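/- Let A ∈ ℝ^{m×n} be a matrix such that the set {v ∈ ℝⁿ : Av = 0, Σᵢ vᵢ = 1, v ≥ 0} is empty. Then there exists u ∈ ℤᵐ such that every coordinate of Aᵀu is strictly positive. -/

import Mathlib

theorem stmt_13 {m n : ℕ} (A : Matrix (Fin m) (Fin n) ℝ)
    (h : ¬ ∃ v : Fin n → ℝ, A.mulVec v = 0 ∧ (∑ i, v i) = 1 ∧ ∀ i, 0 ≤ v i) :
    ∃ u : Fin m → ℤ, ∀ j, 0 < A.transpose.mulVec (fun i => (u i : ℝ)) j := by
  -- separation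
  set S : Set (Fin m → ℝ) := A.mulVec '' stdSimplex ℝ (Fin n) with hS
  have hScomp : IsCompact S := (isCompact_stdSimplex _ _).image
    (LinearMap.continuous_of_finiteDimensional (A.mulVecLin))
  have hSconv : Convex ℝ S := (convex_stdSimplex ℝ _).linear_image A.mulVecLin
  have hdisj : Disjoint S {(0 : Fin m → ℝ)} := by
    rw [Set.disjoint_singleton_right]
    rintro ⟨v, ⟨hv0, hv1⟩, hv2⟩
    exact h ⟨v, hv2, hv1, hv0⟩
  obtain ⟨f, a, b, hfa, hab, hb0⟩ :=
    geometric_hahn_banach_compact_closed hSconv hScomp (convex_singleton _)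
      isClosed_singleton hdisj
  have ha0 : a < 0 := by
    have := hb0 0 rfl
    simp at this
    linarith
  set w : Fin m → ℝ := fun i => -f (Pi.single i 1) with hw
  have hcol : ∀ j, f (A.mulVec (Pi.single j 1)) < a := by
    intro j
    refine hfa _ ⟨Pi.single j 1, ⟨?_, ?_⟩, rfl⟩
    · intro x; simp only [Pi.single_apply]; split <;> norm_num
    · simp
  have key : ∀ j, A.transpose.mulVec w j = - f (A.mulVec (Pi.single j 1)) := by
    intro j
    have hdecomp : A.mulVec (Pi.single j 1) = ∑ i, A i j • (Pi.single i 1 : Fin m → ℝ) := by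
      funext k
      simp [Matrix.mulVec_single, Finset.sum_apply, Pi.single_apply]
    rw [hdecomp, map_sum]
    simp only [map_smul, smul_eq_mul, Matrix.mulVec, dotProduct,
      Matrix.transpose_apply, hw, mul_neg, ← Finset.sum_neg_distrib]
  set ε : ℝ := -a with hε
  have hεpos : 0 < ε := by simp [hε]; linarith
  have hwj : ∀ j, ε < A.transpose.mulVec w j := by
    intro j; rw [key j, hε]; linarith [hcol j]
  set M : ℝ := ∑ i, ∑ j, |A i j| with hM
  have hM0 : 0 ≤ M := Finset.sum_nonneg fun i _ =>
    Finset.sum_nonneg fun j _ => abs_nonneg _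
  obtain ⟨N, hN⟩ := exists_nat_gt (M / ε)
  have hN0 : 0 < (N : ℝ) := lt_of_le_of_lt (div_nonneg hM0 hεpos.le) hN
  have hNε : M < N * ε := by
    rwa [div_lt_iff₀ hεpos] at hN
  refine ⟨fun i => ⌈(N : ℝ) * w i⌉, fun j => ?_⟩
  have hcalc : A.transpose.mulVec (fun i => ((⌈(N : ℝ) * w i⌉ : ℤ) : ℝ)) j
      ≥ N * A.transpose.mulVec w j - ∑ i, |A i j| := by
    simp only [Matrix.mulVec, dotProduct, Matrix.transpose_apply]
    rw [Finset.mul_sum, ← Finset.sum_sub_distrib]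
    apply Finset.sum_le_sum
    intro i _
    have h1 : (N : ℝ) * w i ≤ (⌈(N : ℝ) * w i⌉ : ℝ) := Int.le_ceil _
    have h2 : ((⌈(N : ℝ) * w i⌉ : ℤ) : ℝ) - (N : ℝ) * w i ≤ 1 := by
      have := Int.ceil_lt_add_one ((N : ℝ) * w i)
      linarith
    have habs : |A i j * ((⌈(N : ℝ) * w i⌉ : ℝ) - (N : ℝ) * w i)| ≤ |A i j| := by
      rw [abs_mul]
      calc |A i j| * |(⌈(N : ℝ) * w i⌉ : ℝ) - (N : ℝ) * w i|
          ≤ |A i j| * 1 := by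
            apply mul_le_mul_of_nonneg_left _ (abs_nonneg _)
            rw [abs_le]; constructor <;> linarith
        _ = |A i j| := mul_one _
    have := neg_abs_le (A i j * ((⌈(N : ℝ) * w i⌉ : ℝ) - (N : ℝ) * w i))
    nlinarith [this, habs]
  have hsum : ∑ i, |A i j| ≤ M := by
    rw [hM]
    apply Finset.sum_le_sum
    intro i _
    exact Finset.single_le_sum (fun j' _ => abs_nonneg (A i j')) (Finset.mem_univ j)
  have h3 : N * ε < N * A.transpose.mulVec w j :=
    mul_lt_mul_of_pos_left (hwj j) hN0
  calc (0:ℝ) < N * ε - M := by linarith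
    _ ≤ N * A.transpose.mulVec w j - ∑ i, |A i j| := by linarith
    _ ≤ _ := hcalc
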